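/- Suppose a convolution operator f ↦ (K ⊗ δ) * f, with K a (possibly ℓ²-valued) kernel on ℝ³ acting in the x-variable only, satisfies the bound ‖(K⊗δ) * f‖_{L^{p₁}(dx)L^q(dy)} ≲ ‖f‖_{L^{p₂}(dx)L^q(dy)} for some 1 ≤ p₁, p₂, q ≤ ∞. Then the same operator satisfies ‖(K⊗δ) * f‖_{L^{p₁}(d(x-y))L^q(d(x+y))} ≲ ‖f‖_{L^{p₂}(d(x-y))L^q(d(x+y))}, i.e. the mixed-norm bound transfers to the rotated coordinates (x-y, x+y). -/

import Mathlib

open MeasureTheory Complex Real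
open scoped ENNReal

noncomputable section

abbrev E3 := EuclideanSpace ℝ (Fin 3)

def Rrot (z : E3 × E3) : E3 × E3 :=
  (((Real.sqrt 2)⁻¹ : ℝ) • (z.1 + z.2), ((Real.sqrt 2)⁻¹ : ℝ) • (z.2 - z.1))

/-- Mixed norm `L^p(dx)L^q(dy)` of an `H`-valued function on `ℝ³ × ℝ³`. -/
def mnorm {H : Type*} [NormedAddCommGroup H] (p q : ℝ≥0∞) (f : E3 × E3 → H) : ℝ≥0∞ :=
  eLpNorm (fun x : E3 => (eLpNorm (fun y : E3 => f (x, y)) q volume).toReal) p volume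

/-- Rotated mixed norm `L^p(d(x-y))L^q(d(x+y))`, defined as `‖f ∘ R‖_{L^p(dx)L^q(dy)}`. -/
def rnorm {H : Type*} [NormedAddCommGroup H] (p q : ℝ≥0∞) (f : E3 × E3 → H) : ℝ≥0∞ :=
  mnorm p q (f ∘ Rrot)

/-- Convolution with the kernel `K(x)δ(y)`, `K` possibly vector (e.g. `ℓ²`) valued,
acting in the `x`-variable only: `((K⊗δ) * f)(x,y) = ∫ f(x-x',y) • K(x') dx'`. -/
def convKdelta {H : Type*} [NormedAddCommGroup H] [NormedSpace ℂ H]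
    (K : E3 → H) (f : E3 × E3 → ℂ) (z : E3 × E3) : H :=
  ∫ x' : E3, f (z.1 - x', z.2) • K x'

lemma eLpNorm_comp_measurableEquiv {α β H : Type*} [MeasurableSpace α] [MeasurableSpace β]
    [NormedAddCommGroup H] (μ : Measure α) (e : α ≃ᵐ β) (f : β → H) (p : ℝ≥0∞) :
    eLpNorm (fun a => f (e a)) p μ = eLpNorm f p (Measure.map e μ) := by
  by_cases hp0 : p = 0
  · simp [hp0]
  by_cases hpt : p = ∞
  · simp only [hpt, eLpNorm_exponent_top, eLpNormEssSup]
    rw [e.measurableEmbedding.essSup_map_measure]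
    rfl
  · rw [eLpNorm_eq_lintegral_rpow_enorm_toReal hp0 hpt, eLpNorm_eq_lintegral_rpow_enorm_toReal hp0 hpt,
      lintegral_map_equiv]

lemma eLpNorm_comp_smul {H : Type*} [NormedAddCommGroup H] (G : E3 → H) (p : ℝ≥0∞)
    (c : ℝ) (hc : c ≠ 0) :
    eLpNorm (fun x => G (c • x)) p volume
      = ENNReal.ofReal |(c ^ 3)⁻¹| ^ (1 / p).toReal * eLpNorm G p volume := by
  set e : E3 ≃ᵐ E3 := (Homeomorph.smulOfNeZero c hc).toMeasurableEquiv with he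
  have h1 : eLpNorm (fun x => G (c • x)) p volume = eLpNorm G p (Measure.map e volume) :=
    eLpNorm_comp_measurableEquiv volume e G p
  have h2 : Measure.map e volume = Measure.map (c • ·) (volume : Measure E3) := rfl
  rw [h1, h2, Measure.map_addHaar_smul volume hc,
    finrank_euclideanSpace_fin,
    eLpNorm_smul_measure_of_ne_zero (by positivity : ENNReal.ofReal |(c ^ 3)⁻¹| ≠ 0),
    smul_eq_mul]

lemma eLpNorm_comp_add_right {H : Type*} [NormedAddCommGroup H] (G : E3 → H) (q : ℝ≥0∞)
    (v : E3) : eLpNorm (fun y => G (y + v)) q volume = eLpNorm G q volume := by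
  rw [show (fun y : E3 => G (y + v)) = fun y => G (MeasurableEquiv.addRight v y) from rfl,
    eLpNorm_comp_measurableEquiv,
    show Measure.map (⇑(MeasurableEquiv.addRight v)) volume = volume from
      (measurePreserving_add_right volume v).map_eq]

/-- The shear `(x,y) ↦ (x, y + x)` preserves the mixed norm. -/
lemma mnorm_shear {H : Type*} [NormedAddCommGroup H] (p q : ℝ≥0∞) (F : E3 × E3 → H) :
    mnorm p q (fun z : E3 × E3 => F (z.1, z.2 + z.1)) = mnorm p q F := by
  unfold mnorm
  congr 1
  funext x
  rw [eLpNorm_comp_add_right (fun y => F (x, y)) q x]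

/-- Dilating the first variable rescales the mixed norm. -/
lemma mnorm_dilate {H : Type*} [NormedAddCommGroup H] (p q : ℝ≥0∞) (c : ℝ) (hc : c ≠ 0)
    (F : E3 × E3 → H) :
    mnorm p q (fun z : E3 × E3 => F (c • z.1, z.2))
      = ENNReal.ofReal |(c ^ 3)⁻¹| ^ (1 / p).toReal * mnorm p q F := by
  unfold mnorm
  exact eLpNorm_comp_smul (fun x => (eLpNorm (fun y => F (x, y)) q volume).toReal) p c hc

/-- If the operator `f ↦ (K⊗δ) * f` is bounded from
`L^{p₂}(dx)L^q(dy)` to `L^{p₁}(dx)L^q(dy)`, then it is bounded (with a comparable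
constant) from `L^{p₂}(d(x-y))L^q(d(x+y))` to `L^{p₁}(d(x-y))L^q(d(x+y))`. -/
theorem statement2 {H : Type*} [NormedAddCommGroup H] [NormedSpace ℂ H] [CompleteSpace H]
    (p₁ p₂ q : ℝ≥0∞) (hp₁ : 1 ≤ p₁) (hp₂ : 1 ≤ p₂) (hq : 1 ≤ q)
    (K : E3 → H) (C : ℝ≥0∞)
    (hbd : ∀ f : E3 × E3 → ℂ, mnorm p₁ q (convKdelta K f) ≤ C * mnorm p₂ q f) :
    ∃ A : ℝ≥0∞, A ≠ ∞ ∧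
      ∀ f : E3 × E3 → ℂ, rnorm p₁ q (convKdelta K f) ≤ A * C * rnorm p₂ q f := by
  set s : ℝ := (Real.sqrt 2)⁻¹ with hs_def
  have hsqrt2 : Real.sqrt 2 * Real.sqrt 2 = 2 := Real.mul_self_sqrt (by norm_num)
  have hsqrt2_pos : (0:ℝ) < Real.sqrt 2 := Real.sqrt_pos.mpr (by norm_num)
  have hs : s ≠ 0 := inv_ne_zero (ne_of_gt hsqrt2_pos)
  have hss : (1:ℝ) = s * s + s * s := by
    rw [hs_def]
    field_simp
    rw [Real.sq_sqrt (by norm_num)]; norm_num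
  have h2s : (Real.sqrt 2 : ℝ) = s + s := by
    rw [hs_def, ← two_mul]
    rw [eq_comm, mul_inv_eq_iff_eq_mul₀ (ne_of_gt hsqrt2_pos)]
    nlinarith [hsqrt2]
  set κ₁ : ℝ≥0∞ := ENNReal.ofReal |((Real.sqrt 2) ^ 3)⁻¹| ^ (1 / p₁).toReal with hκ₁
  set κ₂ : ℝ≥0∞ := ENNReal.ofReal |(s ^ 3)⁻¹| ^ (1 / p₂).toReal with hκ₂
  have hκ₁top : κ₁ ≠ ∞ :=
    ENNReal.rpow_ne_top_of_nonneg (by positivity) ENNReal.ofReal_ne_top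
  have hκ₂top : κ₂ ≠ ∞ :=
    ENNReal.rpow_ne_top_of_nonneg (by positivity) ENNReal.ofReal_ne_top
  refine ⟨κ₁ * κ₂, ENNReal.mul_ne_top hκ₁top hκ₂top, fun f => ?_⟩
  -- the auxiliary function
  set h : E3 × E3 → ℂ := fun z => f (z.1 + s • z.2, s • z.2) with hh
  -- pointwise identity for the convolution
  have key1 : (fun z : E3 × E3 => (convKdelta K f ∘ Rrot) (z.1, z.2 + z.1))
      = fun z : E3 × E3 => (convKdelta K h) ((Real.sqrt 2 : ℝ) • z.1, z.2) := by
    funext z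
    simp only [Function.comp_apply, hh]
    unfold convKdelta Rrot
    dsimp only
    congr 1
    funext x'
    have e1 : s • (z.1 + (z.2 + z.1)) - x'
        = (Real.sqrt 2 : ℝ) • z.1 - x' + s • z.2 := by rw [h2s]; module
    have e2 : s • (z.2 + z.1 - z.1) = s • z.2 := by module
    rw [e1, e2]
  -- identity relating `h` to `f ∘ Rrot`
  have key2 : h = fun z : E3 × E3 =>
      (fun w : E3 × E3 => (f ∘ Rrot) (w.1, w.2 + w.1)) (s • z.1, z.2) := by
    funext z
    show f (z.1 + s • z.2, s • z.2) = (f ∘ Rrot) (s • z.1, z.2 + s • z.1)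
    simp only [Function.comp_apply]
    unfold Rrot
    dsimp only
    have e1 : s • (s • z.1 + (z.2 + s • z.1)) = z.1 + s • z.2 := by
      conv_rhs => rw [← one_smul ℝ z.1, hss]
      module
    have e2 : s • (z.2 + s • z.1 - s • z.1) = s • z.2 := by module
    rw [e1, e2]
  calc rnorm p₁ q (convKdelta K f)
      = mnorm p₁ q (fun z : E3 × E3 => (convKdelta K f ∘ Rrot) (z.1, z.2 + z.1)) :=
        (mnorm_shear p₁ q _).symm
    _ = mnorm p₁ q (fun z : E3 × E3 => (convKdelta K h) ((Real.sqrt 2 : ℝ) • z.1, z.2)) := by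
        rw [key1]
    _ = κ₁ * mnorm p₁ q (convKdelta K h) := mnorm_dilate p₁ q _ (ne_of_gt hsqrt2_pos) _
    _ ≤ κ₁ * (C * mnorm p₂ q h) := mul_le_mul_right (hbd h) κ₁
    _ = κ₁ * (C * (κ₂ * mnorm p₂ q (fun z : E3 × E3 => (f ∘ Rrot) (z.1, z.2 + z.1)))) := by
        rw [← mnorm_dilate p₂ q s hs, ← key2]
    _ = κ₁ * (C * (κ₂ * rnorm p₂ q f)) := by rw [mnorm_shear]; rfl
    _ = κ₁ * κ₂ * C * rnorm p₂ q f := by ring
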